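/- Let h : ℝⁿ → ℝ be twice continuously differentiable, f : ℝⁿ → ℝⁿ, G : ℝⁿ → ℝ^{n×m}, and k_d : ℝⁿ → ℝᵐ locally Lipschitz, and α : ℝ → ℝ locally Lipschitz, strictly increasing with α(0) = 0. Let D ⊆ ℝⁿ be open and suppose the CBF condition holds on D: for every x ∈ D, either G(x)ᵀ∇h(x) ≠ 0 or ∇h(x)·f(x) > -α(h(x)). Define a(x) = α(h(x)) + ∇h(x)·f(x) + ∇h(x)·G(x)k_d(x), b(x) = ‖G(x)ᵀ∇h(x)‖², λ_QP(a, b) = 0 if b = 0 and max{0, -a/b} if b ≠ 0, and k_QP(x) = k_d(x) + λ_QP(a(x), b(x))·G(x)ᵀ∇h(x). Then (a(x), b(x)) ∈ P = {(a,b) : a > 0 or b > 0} for every x ∈ D, and k_QP is locally Lipschitz on D. -/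

import Mathlib

set_option linter.unusedSectionVars false
open Metric Set

section helpers
variable {X : Type*} [MetricSpace X]
variable {E F G' : Type*} [NormedAddCommGroup E] [NormedSpace ℝ E]
  [NormedAddCommGroup F] [NormedSpace ℝ F] [NormedAddCommGroup G'] [NormedSpace ℝ G']

lemma myLipOn_of_dist_le {f : X → E} {s : Set X} {C : ℝ}
    (hC : ∀ x ∈ s, ∀ y ∈ s, dist (f x) (f y) ≤ C * dist x y) :
    LipschitzOnWith C.toNNReal f s := by
  apply LipschitzOnWith.of_dist_le_mul
  intro x hx y hy
  calc dist (f x) (f y) ≤ C * dist x y := hC x hx y hy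
    _ ≤ C.toNNReal * dist x y :=
      mul_le_mul_of_nonneg_right (Real.le_coe_toNNReal C) dist_nonneg

lemma myLipOn_congr {f g : X → E} {s : Set X} {K : NNReal}
    (hf : LipschitzOnWith K f s) (hfg : ∀ x ∈ s, g x = f x) :
    LipschitzOnWith K g s := fun x hx y hy => by
  rw [hfg x hx, hfg y hy]; exact hf hx hy

lemma myNormBound {u : X → E} {K : NNReal} {x : X} {r : ℝ}
    (h : LipschitzOnWith K u (closedBall x r)) (hr : 0 ≤ r) :
    ∀ y ∈ closedBall x r, ‖u y‖ ≤ ‖u x‖ + K * r := by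
  intro y hy
  have hx : x ∈ closedBall x r := mem_closedBall_self hr
  have h1 : dist (u y) (u x) ≤ K * dist y x := h.dist_le_mul y hy x hx
  have h2 : dist y x ≤ r := mem_closedBall.mp hy
  have h3 : (K : ℝ) * dist y x ≤ K * r := mul_le_mul_of_nonneg_left h2 K.coe_nonneg
  calc ‖u y‖ = dist (u y) 0 := (dist_zero_right _).symm
    _ ≤ dist (u y) (u x) + dist (u x) 0 := dist_triangle _ _ _
    _ ≤ K * r + ‖u x‖ := by rw [dist_zero_right]; linarith
    _ = ‖u x‖ + K * r := by ring

lemma myLipOn_bilin (B : E →L[ℝ] F →L[ℝ] G') {u : X → E} {v : X → F} {s : Set X}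
    {Ku Kv : NNReal} {Mu Mv : ℝ}
    (hu : LipschitzOnWith Ku u s) (hv : LipschitzOnWith Kv v s)
    (hMu : ∀ x ∈ s, ‖u x‖ ≤ Mu) (hMv : ∀ x ∈ s, ‖v x‖ ≤ Mv) :
    ∃ K : NNReal, LipschitzOnWith K (fun x => B (u x) (v x)) s := by
  refine ⟨_, myLipOn_of_dist_le (C := ‖B‖ * Mu * Kv + ‖B‖ * Mv * Ku) ?_⟩
  intro x hx y hy
  have h1 : dist (B (u x) (v x)) (B (u y) (v y)) ≤
      ‖B (u x) (v x - v y)‖ + ‖B (u x - u y) (v y)‖ := by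
    rw [dist_eq_norm]
    have heq : B (u x) (v x) - B (u y) (v y)
        = B (u x) (v x - v y) + B (u x - u y) (v y) := by
      simp only [map_sub, ContinuousLinearMap.sub_apply]
      abel
    rw [heq]; exact norm_add_le _ _
  have h2 : ‖B (u x) (v x - v y)‖ ≤ ‖B‖ * Mu * (Kv * dist x y) := by
    calc ‖B (u x) (v x - v y)‖ ≤ ‖B‖ * ‖u x‖ * ‖v x - v y‖ := B.le_opNorm₂ _ _
      _ ≤ ‖B‖ * Mu * (Kv * dist x y) := by
          have e1 : ‖v x - v y‖ ≤ Kv * dist x y := by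
            rw [← dist_eq_norm]; exact hv.dist_le_mul x hx y hy
          have e2 : ‖u x‖ ≤ Mu := hMu x hx
          exact mul_le_mul (mul_le_mul_of_nonneg_left e2 (ContinuousLinearMap.opNorm_nonneg B)) e1
            (norm_nonneg _) (mul_nonneg (ContinuousLinearMap.opNorm_nonneg B) ((norm_nonneg _).trans e2))
  have h3 : ‖B (u x - u y) (v y)‖ ≤ ‖B‖ * Mv * (Ku * dist x y) := by
    calc ‖B (u x - u y) (v y)‖ ≤ ‖B‖ * ‖u x - u y‖ * ‖v y‖ := B.le_opNorm₂ _ _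
      _ ≤ ‖B‖ * (Ku * dist x y) * Mv := by
          have e1 : ‖u x - u y‖ ≤ Ku * dist x y := by
            rw [← dist_eq_norm]; exact hu.dist_le_mul x hx y hy
          have e2 : ‖v y‖ ≤ Mv := hMv y hy
          exact mul_le_mul (mul_le_mul_of_nonneg_left e1 (ContinuousLinearMap.opNorm_nonneg B)) e2
            (norm_nonneg _) (mul_nonneg (ContinuousLinearMap.opNorm_nonneg B) (mul_nonneg Ku.coe_nonneg dist_nonneg))
      _ = ‖B‖ * Mv * (Ku * dist x y) := by ring
  calc dist (B (u x) (v x)) (B (u y) (v y))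
      ≤ ‖B‖ * Mu * (Kv * dist x y) + ‖B‖ * Mv * (Ku * dist x y) := by linarith
    _ = (‖B‖ * Mu * Kv + ‖B‖ * Mv * Ku) * dist x y := by ring

lemma myLocLip_bilin (B : E →L[ℝ] F →L[ℝ] G') {u : X → E} {v : X → F}
    (hu : LocallyLipschitz u) (hv : LocallyLipschitz v) :
    LocallyLipschitz fun x => B (u x) (v x) := by
  intro x
  obtain ⟨Ku, tu, htu, hu⟩ := hu x
  obtain ⟨Kv, tv, htv, hv⟩ := hv x
  obtain ⟨ε, hε, hball⟩ := Metric.mem_nhds_iff.mp (Filter.inter_mem htu htv)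
  have hr : (0:ℝ) < ε / 2 := by linarith
  have hsb : closedBall x (ε/2) ⊆ ball x ε := closedBall_subset_ball (by linarith)
  have hs_u : closedBall x (ε/2) ⊆ tu := fun y hy => (hball (hsb hy)).1
  have hs_v : closedBall x (ε/2) ⊆ tv := fun y hy => (hball (hsb hy)).2
  have hu' := hu.mono hs_u
  have hv' := hv.mono hs_v
  obtain ⟨K, hK⟩ := myLipOn_bilin B hu' hv' (myNormBound hu' hr.le) (myNormBound hv' hr.le)
  exact ⟨K, closedBall x (ε/2), closedBall_mem_nhds x hr, hK⟩

lemma myLipOn_inv {b : X → ℝ} {Kb : NNReal} {s : Set X} {c : ℝ}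
    (hb : LipschitzOnWith Kb b s) (hc : 0 < c) (hbc : ∀ x ∈ s, c ≤ b x) :
    ∃ K : NNReal, LipschitzOnWith K (fun x => (b x)⁻¹) s := by
  refine ⟨_, myLipOn_of_dist_le (C := Kb * (c⁻¹ * c⁻¹)) ?_⟩
  intro x hx y hy
  have hbx : 0 < b x := hc.trans_le (hbc x hx)
  have hby : 0 < b y := hc.trans_le (hbc y hy)
  have key : (b x)⁻¹ - (b y)⁻¹ = (b y - b x) / (b x * b y) :=
    inv_sub_inv hbx.ne' hby.ne'
  have habs : dist (b x)⁻¹ (b y)⁻¹ = |b y - b x| / (b x * b y) := by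
    rw [Real.dist_eq, key, abs_div, abs_of_pos (mul_pos hbx hby)]
  have h1 : |b y - b x| ≤ Kb * dist x y := by
    rw [abs_sub_comm, ← Real.dist_eq]; exact hb.dist_le_mul x hx y hy
  have h2 : c * c ≤ b x * b y :=
    mul_le_mul (hbc x hx) (hbc y hy) hc.le (hc.le.trans (hbc x hx))
  have h3 : |b y - b x| / (b x * b y) ≤ (Kb * dist x y) / (c * c) :=
    div_le_div₀ (mul_nonneg Kb.coe_nonneg dist_nonneg) h1 (mul_pos hc hc) h2
  have h4 : ((Kb : ℝ) * dist x y) / (c * c) = Kb * (c⁻¹ * c⁻¹) * dist x y := by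
    rw [div_eq_mul_inv, mul_inv]; ring
  calc dist (b x)⁻¹ (b y)⁻¹ = |b y - b x| / (b x * b y) := habs
    _ ≤ (Kb * dist x y) / (c * c) := h3
    _ = Kb * (c⁻¹ * c⁻¹) * dist x y := h4

end helpers
open scoped RealInnerProductSpace

/-- The piecewise gain of the closed-form CBF-QP controller. -/
noncomputable def lamQP (a b : ℝ) : ℝ := if b = 0 then 0 else max 0 (-a / b)

theorem stmt_6 (n m : ℕ)
    (h : EuclideanSpace ℝ (Fin n) → ℝ)
    (f : EuclideanSpace ℝ (Fin n) → EuclideanSpace ℝ (Fin n))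
    (G : EuclideanSpace ℝ (Fin n) →
      (EuclideanSpace ℝ (Fin m) →L[ℝ] EuclideanSpace ℝ (Fin n)))
    (kd : EuclideanSpace ℝ (Fin n) → EuclideanSpace ℝ (Fin m))
    (α : ℝ → ℝ)
    (hh : ContDiff ℝ 2 h) (hf : LocallyLipschitz f) (hG : LocallyLipschitz G)
    (hkd : LocallyLipschitz kd)
    (hα : LocallyLipschitz α) (hmono : StrictMono α) (hα0 : α 0 = 0)
    (D : Set (EuclideanSpace ℝ (Fin n))) (hD : IsOpen D)
    (hcbf : ∀ x ∈ D, ContinuousLinearMap.adjoint (G x) (gradient h x) ≠ 0 ∨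
      ⟪gradient h x, f x⟫ > -α (h x))
    (a b : EuclideanSpace ℝ (Fin n) → ℝ)
    (ha : ∀ x, a x = α (h x) + ⟪gradient h x, f x⟫ + ⟪gradient h x, G x (kd x)⟫)
    (hb : ∀ x, b x = ‖ContinuousLinearMap.adjoint (G x) (gradient h x)‖ ^ 2)
    (kQP : EuclideanSpace ℝ (Fin n) → EuclideanSpace ℝ (Fin m))
    (hkQP : ∀ x, kQP x =
      kd x + lamQP (a x) (b x) • ContinuousLinearMap.adjoint (G x) (gradient h x)) :
    (∀ x ∈ D, 0 < a x ∨ 0 < b x) ∧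
    (∀ x ∈ D, ∃ K : NNReal, ∃ t ∈ nhds x, LipschitzOnWith K kQP (t ∩ D)) := by
  classical
  set w := gradient h with hw_def
  have hw_cd : ContDiff ℝ 1 w := by
    have h1 : ContDiff ℝ 1 (fderiv ℝ h) := hh.fderiv_right (m := 1) (by norm_num)
    have h2 : w = (fun L => (InnerProductSpace.toDual ℝ (EuclideanSpace ℝ (Fin n))).symm L) ∘ (fderiv ℝ h) := rfl
    rw [h2]
    exact ((InnerProductSpace.toDual ℝ (EuclideanSpace ℝ (Fin n))).symm.contDiff).comp h1
  have hw : LocallyLipschitz w := hw_cd.locallyLipschitz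
  have hhL : LocallyLipschitz h := (hh.of_le (by norm_num)).locallyLipschitz
  -- A x = adjoint (G x)
  have hAdj : LipschitzWith 1
      (fun T : EuclideanSpace ℝ (Fin m) →L[ℝ] EuclideanSpace ℝ (Fin n) => ContinuousLinearMap.adjoint T) :=
    (ContinuousLinearMap.adjoint (E := EuclideanSpace ℝ (Fin m)) (F := EuclideanSpace ℝ (Fin n)) (𝕜 := ℝ)).isometry.lipschitz
  set A := fun x => ContinuousLinearMap.adjoint (G x) with hA_def
  have hA : LocallyLipschitz A := hAdj.locallyLipschitz.comp hG
  set v := fun x => A x (w x) with hv_def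
  have hv : LocallyLipschitz v := by
    have := myLocLip_bilin (ContinuousLinearMap.apply ℝ (EuclideanSpace ℝ (Fin m))) hw hA
    simpa [ContinuousLinearMap.apply_apply] using this
  have hGkd : LocallyLipschitz (fun x => G x (kd x)) := by
    have := myLocLip_bilin (ContinuousLinearMap.apply ℝ (EuclideanSpace ℝ (Fin n))) hkd hG
    simpa [ContinuousLinearMap.apply_apply] using this
  have haL : LocallyLipschitz a := by
    have heq : a = fun x => (α (h x) + ⟪w x, f x⟫) + ⟪w x, G x (kd x)⟫ :=
      funext fun x => ha x
    rw [heq]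
    apply LocallyLipschitz.add
    apply LocallyLipschitz.add
    · exact hα.comp hhL
    · have := myLocLip_bilin (innerSL ℝ (E := EuclideanSpace ℝ (Fin n))) hw hf
      exact this
    · have := myLocLip_bilin (innerSL ℝ (E := EuclideanSpace ℝ (Fin n))) hw hGkd
      exact this
  have hbL : LocallyLipschitz b := by
    have heq : b = fun x => ⟪v x, v x⟫ := by
      funext x
      rw [hb x]
      exact (real_inner_self_eq_norm_sq _).symm
    rw [heq]
    have := myLocLip_bilin (innerSL ℝ (E := EuclideanSpace ℝ (Fin m))) hv hv
    exact this
  have hbnn : ∀ x, 0 ≤ b x := fun x => by rw [hb x]; positivity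
  have key : ∀ x ∈ D, 0 < a x ∨ 0 < b x := by
    intro x hx
    by_cases hz : ContinuousLinearMap.adjoint (G x) (gradient h x) = 0
    · left
      have h2 : ⟪gradient h x, f x⟫ > -α (h x) := (hcbf x hx).resolve_left (not_not.mpr hz)
      have h3 : ⟪gradient h x, G x (kd x)⟫ = (0:ℝ) := by
        rw [← ContinuousLinearMap.adjoint_inner_left, hz, inner_zero_left]
      rw [ha x, h3]
      linarith
    · right
      rw [hb x]
      exact pow_pos (norm_pos_iff.mpr hz) 2
  refine ⟨key, ?_⟩
  intro x₀ hx₀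
  by_cases hbx : 0 < b x₀
  · -- b x₀ > 0
    obtain ⟨Ka, ta, hta, hLa⟩ := haL x₀
    obtain ⟨Kb, tb, htb, hLb⟩ := hbL x₀
    obtain ⟨Kv, tv, htv, hLv⟩ := hv x₀
    obtain ⟨Kd, td, htd, hLd⟩ := hkd x₀
    set c := b x₀ / 2 with hc_def
    have hc : 0 < c := half_pos hbx
    have hopen : {x | c < b x} ∈ nhds x₀ :=
      (isOpen_lt continuous_const hbL.continuous).mem_nhds (half_lt_self hbx)
    have hmem : ta ∩ tb ∩ tv ∩ td ∩ {x | c < b x} ∈ nhds x₀ :=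
      Filter.inter_mem (Filter.inter_mem (Filter.inter_mem (Filter.inter_mem hta htb) htv)
        htd) hopen
    obtain ⟨ε, hε, hball⟩ := Metric.mem_nhds_iff.mp hmem
    set r := ε / 2 with hr_def
    have hr : 0 < r := half_pos hε
    set s := Metric.closedBall x₀ r with hs_def
    have hsball : s ⊆ Metric.ball x₀ ε := Metric.closedBall_subset_ball (half_lt_self hε)
    have hsub : ∀ y ∈ s, y ∈ ta ∩ tb ∩ tv ∩ td ∩ {x | c < b x} := fun y hy => hball (hsball hy)
    have hLa' : LipschitzOnWith Ka a s := hLa.mono (fun y hy => (hsub y hy).1.1.1.1)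
    have hLb' : LipschitzOnWith Kb b s := hLb.mono (fun y hy => (hsub y hy).1.1.1.2)
    have hLv' : LipschitzOnWith Kv v s := hLv.mono (fun y hy => (hsub y hy).1.1.2)
    have hLd' : LipschitzOnWith Kd kd s := hLd.mono (fun y hy => (hsub y hy).1.2)
    have hsc : ∀ y ∈ s, c < b y := fun y hy => (hsub y hy).2
    obtain ⟨Ki, hLi⟩ := myLipOn_inv hLb' hc (fun y hy => (hsc y hy).le)
    have hLna : LipschitzOnWith Ka (fun y => -(a y)) s := hLa'.neg
    obtain ⟨Kq, hLq⟩ := myLipOn_bilin (ContinuousLinearMap.mul ℝ ℝ) hLna hLi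
      (myNormBound hLna hr.le) (myNormBound hLi hr.le)
    have hLq' : LipschitzOnWith Kq (fun y => -(a y) * (b y)⁻¹) s :=
      myLipOn_congr hLq (fun y _ => by simp [ContinuousLinearMap.mul_apply'])
    set lam := fun y => max 0 (-(a y) * (b y)⁻¹) with hlam_def
    have hLlam : LipschitzOnWith (1 * Kq) lam s :=
      (LipschitzWith.id.const_max 0).comp_lipschitzOnWith hLq'
    obtain ⟨Kf, hLf⟩ := myLipOn_bilin ((ContinuousLinearMap.lsmul ℝ ℝ : ℝ →L[ℝ] EuclideanSpace ℝ (Fin m) →L[ℝ] EuclideanSpace ℝ (Fin m))) hLlam hLv'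
      (myNormBound hLlam hr.le) (myNormBound hLv' hr.le)
    have hLf' : LipschitzOnWith Kf (fun y => lam y • v y) s :=
      myLipOn_congr hLf (fun y _ => by simp [ContinuousLinearMap.lsmul_apply])
    have hsum : LipschitzOnWith (Kd + Kf) (fun y => kd y + lam y • v y) s := hLd'.add hLf'
    have heq : ∀ y ∈ s ∩ D, kQP y = kd y + lam y • v y := by
      intro y hy
      have hby : c < b y := hsc y hy.1
      have hbne : b y ≠ 0 := (hc.trans hby).ne'
      rw [hkQP y]
      congr 1
      show lamQP (a y) (b y) • _ = lam y • v y
      rw [lamQP, if_neg hbne, hlam_def]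
      rw [div_eq_mul_inv]
    exact ⟨Kd + Kf, s, Metric.closedBall_mem_nhds x₀ hr,
      myLipOn_congr (hsum.mono Set.inter_subset_left) heq⟩
  · -- b x₀ = 0, so a x₀ > 0, and kQP = kd near x₀
    have hax : 0 < a x₀ := (key x₀ hx₀).resolve_right hbx
    obtain ⟨Kd, td, htd, hLd⟩ := hkd x₀
    have hopen : {x | 0 < a x} ∈ nhds x₀ :=
      (isOpen_lt continuous_const haL.continuous).mem_nhds hax
    refine ⟨Kd, td ∩ {x | 0 < a x}, Filter.inter_mem htd hopen, ?_⟩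
    have heq : ∀ y ∈ (td ∩ {x | 0 < a x}) ∩ D, kQP y = kd y := by
      intro y hy
      have hay : 0 < a y := hy.1.2
      have hlam : lamQP (a y) (b y) = 0 := by
        rw [lamQP]
        split_ifs with hby
        · rfl
        · have hbypos : 0 < b y := lt_of_le_of_ne (hbnn y) (Ne.symm hby)
          have hneg : -a y / b y < 0 := div_neg_of_neg_of_pos (neg_lt_zero.mpr hay) hbypos
          exact max_eq_left hneg.le
      rw [hkQP y, hlam, zero_smul, add_zero]
    exact myLipOn_congr (hLd.mono (fun y hy => hy.1.1)) heq
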